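/- Let X_1, …, X_n be independent random vectors each distributed according to a probabilistic unit norm tight frame on S^{d-1}. Then E‖(1/n)∑_{k=1}^n X_k X_k^T − (1/d)I_d‖_F² = (1/n)(1 − 1/d). -/

import Mathlib

open MeasureTheory ProbabilityTheory RealInnerProductSpace

noncomputable def auxF {d : ℕ} (i j : Fin d) (y : EuclideanSpace ℝ (Fin d)) : ℝ :=
  y i * y j - (if i = j then (d : ℝ)⁻¹ else 0)

lemma coordMeas {d : ℕ} (i : Fin d) :
    Measurable (fun y : EuclideanSpace ℝ (Fin d) => y i) :=
  (measurable_pi_apply i).comp (PiLp.continuous_ofLp (p := 2) (β := fun _ : Fin d => ℝ)).measurable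

lemma coordAbs {d : ℕ} (y : EuclideanSpace ℝ (Fin d)) (hy : ‖y‖ = 1) (i : Fin d) :
    |y i| ≤ 1 := by
  have h1 : y i = ⟪EuclideanSpace.single i (1:ℝ), y⟫ := by
    simp [EuclideanSpace.inner_single_left]
  have h2 := abs_real_inner_le_norm (EuclideanSpace.single i (1:ℝ)) y
  rw [← h1, EuclideanSpace.norm_single, hy] at h2
  simpa using h2

lemma sumSq {d : ℕ} (y : EuclideanSpace ℝ (Fin d)) : ∑ i, (y i)^2 = ‖y‖^2 := by
  rw [PiLp.norm_sq_eq_of_L2]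
  simp [sq_abs]

lemma auxF_meas {d : ℕ} (i j : Fin d) : Measurable (auxF i j) :=
  ((coordMeas i).mul (coordMeas j)).sub measurable_const

lemma auxF_bound {d : ℕ} (hd : 0 < d) (i j : Fin d) (y : EuclideanSpace ℝ (Fin d))
    (hy : ‖y‖ = 1) : |auxF i j y| ≤ 2 := by
  have h1 : |y i * y j| ≤ 1 := by
    rw [abs_mul]
    exact mul_le_one₀ (coordAbs y hy i) (abs_nonneg _) (coordAbs y hy j)
  have hd1 : (d : ℝ)⁻¹ ≤ 1 := by
    rw [inv_le_one_iff₀]; right; exact_mod_cast hd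
  have h2 : |(if i = j then (d : ℝ)⁻¹ else 0)| ≤ 1 := by
    split
    · rw [abs_of_nonneg (by positivity)]; exact hd1
    · simp
  calc |auxF i j y| ≤ |y i * y j| + |(if i = j then (d : ℝ)⁻¹ else 0)| := abs_sub _ _
  _ ≤ 2 := by linarith

/-- Random vectors independently distributed according to probabilistic unit norm tight
frames on the sphere: the mean squared distance of the scaled frame operator to
`(1/d)·I_d` equals `(1/n)(1 - 1/d)`. -/
theorem stmt_9 {d n : ℕ} (hd : 0 < d) (hn : 0 < n)
    {Ω : Type*} [MeasurableSpace Ω] (P : Measure Ω) [IsProbabilityMeasure P]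
    (μ : Fin n → Measure (EuclideanSpace ℝ (Fin d)))
    [∀ k, IsProbabilityMeasure (μ k)]
    (hsphere : ∀ k, μ k (Metric.sphere (0 : EuclideanSpace ℝ (Fin d)) 1) = 1)
    (X : Fin n → Ω → EuclideanSpace ℝ (Fin d))
    (hmeas : ∀ k, Measurable (X k))
    (hindep : iIndepFun X P)
    (hlaw : ∀ k, Measure.map (X k) P = μ k)
    (htight : ∀ k, ∀ x : EuclideanSpace ℝ (Fin d),
      (∫ y, ⟪x, y⟫ ^ 2 ∂μ k) = ‖x‖ ^ 2 / d) :
    (∫ ω, ∑ i, ∑ j,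
        (((n : ℝ)⁻¹ * ∑ k, X k ω i * X k ω j) -
          (if i = j then (d : ℝ)⁻¹ else 0)) ^ 2 ∂P) =
      (n : ℝ)⁻¹ * (1 - (d : ℝ)⁻¹) := by
  have hd0 : (d : ℝ) ≠ 0 := Nat.cast_ne_zero.mpr hd.ne'
  have hn0 : (n : ℝ) ≠ 0 := Nat.cast_ne_zero.mpr hn.ne'
  -- a.e. sphere
  have hμsph : ∀ k, ∀ᵐ y ∂μ k, ‖y‖ = 1 := by
    intro k
    have hc : μ k (Metric.sphere (0 : EuclideanSpace ℝ (Fin d)) 1)ᶜ = 0 := by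
      rw [measure_compl Metric.isClosed_sphere.measurableSet (measure_ne_top _ _),
        hsphere k, measure_univ, tsub_self]
    filter_upwards [mem_ae_iff.mpr hc] with y hy
    exact mem_sphere_zero_iff_norm.mp hy
  have hXsph : ∀ k, ∀ᵐ ω ∂P, ‖X k ω‖ = 1 := by
    intro k
    have hc : P ((X k ⁻¹' Metric.sphere (0 : EuclideanSpace ℝ (Fin d)) 1)ᶜ) = 0 := by
      rw [← Set.preimage_compl, ← Measure.map_apply (hmeas k)
        Metric.isClosed_sphere.measurableSet.compl, hlaw k,
        measure_compl Metric.isClosed_sphere.measurableSet (measure_ne_top _ _),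
        hsphere k, measure_univ, tsub_self]
    filter_upwards [mem_ae_iff.mpr hc] with ω hω
    exact mem_sphere_zero_iff_norm.mp hω
  -- integrability over μ k
  have intμ : ∀ (k : Fin n) (g : EuclideanSpace ℝ (Fin d) → ℝ) (C : ℝ), Measurable g →
      (∀ y, ‖y‖ = 1 → |g y| ≤ C) → Integrable g (μ k) := by
    intro k g C hg hb
    refine (integrable_const C).mono' hg.aestronglyMeasurable ?_
    filter_upwards [hμsph k] with y hy
    simpa [Real.norm_eq_abs] using hb y hy
  have intprod : ∀ (k : Fin n) (a b : Fin d), Integrable (fun y => y a * y b) (μ k) := by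
    intro k a b
    refine intμ k _ 1 ((coordMeas a).mul (coordMeas b)) fun y hy => ?_
    rw [abs_mul]
    exact mul_le_one₀ (coordAbs y hy a) (abs_nonneg _) (coordAbs y hy b)
  have intprodsq : ∀ (k : Fin n) (a b : Fin d),
      Integrable (fun y => (y a * y b)^2) (μ k) := by
    intro k a b
    refine intμ k _ 1 (((coordMeas a).mul (coordMeas b)).pow_const 2) fun y hy => ?_
    have h1 : |y a * y b| ≤ 1 := by
      rw [abs_mul]
      exact mul_le_one₀ (coordAbs y hy a) (abs_nonneg _) (coordAbs y hy b)
    calc |(y a * y b)^2| = |y a * y b| * |y a * y b| := by rw [sq, abs_mul]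
    _ ≤ 1 := mul_le_one₀ h1 (abs_nonneg _) h1
  -- diagonal second moments
  have mdiag : ∀ (k : Fin n) (i : Fin d), ∫ y, y i * y i ∂μ k = (d : ℝ)⁻¹ := by
    intro k i
    have ht := htight k (EuclideanSpace.single i (1:ℝ))
    simp only [EuclideanSpace.inner_single_left, RCLike.conj_to_real, one_mul,
      EuclideanSpace.norm_single, norm_one, one_pow] at ht
    rw [one_div] at ht
    rw [← ht]
    congr 1; funext y; ring
  -- off-diagonal second moments
  have m2 : ∀ (k : Fin n) (i j : Fin d),
      ∫ y, y i * y j ∂μ k = if i = j then (d : ℝ)⁻¹ else 0 := by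
    intro k i j
    by_cases hij : i = j
    · subst hij; rw [if_pos rfl]; exact mdiag k i
    · rw [if_neg hij]
      have ht := htight k (EuclideanSpace.single i (1:ℝ) + EuclideanSpace.single j (1:ℝ))
      simp only [inner_add_left, EuclideanSpace.inner_single_left, RCLike.conj_to_real,
        one_mul] at ht
      have hx : ‖EuclideanSpace.single i (1:ℝ) + EuclideanSpace.single j (1:ℝ)‖^2 = 2 := by
        rw [norm_add_sq_real]
        simp only [EuclideanSpace.norm_single, norm_one, one_pow, real_inner_comm]
        rw [EuclideanSpace.inner_single_left]
        simp [EuclideanSpace.single_apply, Ne.symm hij, hij]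
        norm_num
      rw [hx] at ht
      have hA : Integrable (fun y : EuclideanSpace ℝ (Fin d) =>
          y j * y j + 2 * (y i * y j)) (μ k) :=
        (intprod k j j).add ((intprod k i j).const_mul 2)
      have e1 : (∫ y, (y i + y j)^2 ∂μ k)
          = (∫ y, y i * y i ∂μ k) + ((∫ y, y j * y j ∂μ k) + 2 * ∫ y, y i * y j ∂μ k) := by
        have e : (fun y : EuclideanSpace ℝ (Fin d) => (y i + y j)^2)
            = fun y => y i * y i + (y j * y j + 2 * (y i * y j)) := by
          funext y; ring
        rw [e, integral_add (intprod k i i) hA,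
          integral_add (intprod k j j) ((intprod k i j).const_mul 2), integral_const_mul]
      rw [e1, mdiag k i, mdiag k j] at ht
      have : (2 : ℝ) / d = (d:ℝ)⁻¹ + (d:ℝ)⁻¹ := by field_simp; ring
      rw [this] at ht
      linarith
  -- fourth moment sum
  have m4 : ∀ k : Fin n, (∑ i, ∑ j, ∫ y, (y i * y j)^2 ∂μ k) = 1 := by
    intro k
    have h1 : (∑ i, ∑ j, ∫ y, (y i * y j)^2 ∂μ k)
        = ∫ y, ∑ i, ∑ j, (y i * y j)^2 ∂μ k := by
      rw [integral_finset_sum _ (fun i _ => integrable_finset_sum _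
        (fun j _ => intprodsq k i j))]
      exact Finset.sum_congr rfl fun i _ =>
        (integral_finset_sum _ (fun j _ => intprodsq k i j)).symm
    rw [h1]
    have h2 : ∀ᵐ y ∂μ k, (∑ i, ∑ j, (y i * y j)^2) = 1 := by
      filter_upwards [hμsph k] with y hy
      have e : ∑ i, ∑ j, (y i * y j)^2 = (∑ i, (y i)^2) * ∑ j, (y j)^2 := by
        rw [Fintype.sum_mul_sum]
        simp_rw [mul_pow]
      rw [e, sumSq y, hy]
      norm_num
    rw [integral_congr_ae h2]
    simp
  -- integrability over P
  have WInt : ∀ (i j : Fin d) (k : Fin n),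
      Integrable (fun ω => auxF i j (X k ω)) P := by
    intro i j k
    refine (integrable_const (2:ℝ)).mono'
      ((auxF_meas i j).comp (hmeas k)).aestronglyMeasurable ?_
    filter_upwards [hXsph k] with ω hω
    simpa [Real.norm_eq_abs] using auxF_bound hd i j _ hω
  have WWInt : ∀ (i j : Fin d) (k l : Fin n),
      Integrable (fun ω => auxF i j (X k ω) * auxF i j (X l ω)) P := by
    intro i j k l
    refine (integrable_const (4:ℝ)).mono'
      ((((auxF_meas i j).comp (hmeas k))).mul
        ((auxF_meas i j).comp (hmeas l))).aestronglyMeasurable ?_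
    filter_upwards [hXsph k, hXsph l] with ω h1 h2
    rw [Real.norm_eq_abs, abs_mul]
    have := mul_le_mul (auxF_bound hd i j _ h1) (auxF_bound hd i j _ h2)
      (abs_nonneg _) (by norm_num : (0:ℝ) ≤ 2)
    linarith
  -- pushforward
  have hpush : ∀ (g : EuclideanSpace ℝ (Fin d) → ℝ), Measurable g → ∀ k : Fin n,
      (∫ ω, g (X k ω) ∂P) = ∫ y, g y ∂μ k := by
    intro g hg k
    have h := integral_map (μ := P) (hmeas k).aemeasurable hg.aestronglyMeasurable
    rw [hlaw k] at h
    exact h.symm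
  -- mean zero
  have Wmean : ∀ (i j : Fin d) (k : Fin n), (∫ ω, auxF i j (X k ω) ∂P) = 0 := by
    intro i j k
    rw [hpush _ (auxF_meas i j) k]
    have e : (∫ y, auxF i j y ∂μ k)
        = (∫ y, y i * y j ∂μ k) - ∫ _, (if i = j then (d : ℝ)⁻¹ else 0) ∂μ k :=
      integral_sub (intprod k i j) (integrable_const _)
    rw [e, m2 k i j, integral_const]
    simp
  -- sum of second moments of W
  have Wsq : ∀ k : Fin n, (∑ i, ∑ j, ∫ ω, (auxF i j (X k ω))^2 ∂P) = 1 - (d : ℝ)⁻¹ := by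
    intro k
    have hterm : ∀ i j : Fin d, (∫ ω, (auxF i j (X k ω))^2 ∂P)
        = (∫ y, (y i * y j)^2 ∂μ k) - (if i = j then (d : ℝ)⁻¹ else 0)^2 := by
      intro i j
      have hg : Measurable (fun y => (auxF i j y)^2) := (auxF_meas i j).pow_const 2
      rw [show (fun ω => (auxF i j (X k ω))^2) = fun ω => (fun y => (auxF i j y)^2) (X k ω)
        from rfl, hpush _ hg k]
      set c : ℝ := if i = j then (d : ℝ)⁻¹ else 0 with hc
      have e : (fun y : EuclideanSpace ℝ (Fin d) => (auxF i j y)^2)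
          = fun y => ((y i * y j)^2 - (2 * c) * (y i * y j)) + c^2 := by
        funext y; simp only [auxF, hc]; ring
      have hS : Integrable (fun y : EuclideanSpace ℝ (Fin d) =>
          (y i * y j)^2 - (2 * c) * (y i * y j)) (μ k) :=
        (intprodsq k i j).sub ((intprod k i j).const_mul _)
      rw [e, integral_add hS (integrable_const _),
        integral_sub (intprodsq k i j) ((intprod k i j).const_mul _),
        integral_const_mul, m2 k i j, integral_const]
      simp only [probReal_univ, ENNReal.toReal_one, smul_eq_mul, one_mul, ← hc]
      ring
    simp_rw [hterm]
    have hsplit : (∑ i : Fin d, ∑ j : Fin d, ((∫ y, (y i * y j)^2 ∂μ k)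
          - (if i = j then (d : ℝ)⁻¹ else 0)^2))
        = (∑ i : Fin d, ∑ j : Fin d, ∫ y, (y i * y j)^2 ∂μ k)
          - ∑ i : Fin d, ∑ j : Fin d, (if i = j then (d : ℝ)⁻¹ else 0)^2 := by
      rw [← Finset.sum_sub_distrib]
      exact Finset.sum_congr rfl fun i _ => Finset.sum_sub_distrib _ _
    rw [hsplit, m4 k]
    congr 1
    have hrow : ∀ i : Fin d, (∑ j, (if i = j then (d : ℝ)⁻¹ else 0)^2) = (d : ℝ)⁻¹^2 := by
      intro i
      rw [Finset.sum_eq_single i (fun b _ hb => by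
        rw [if_neg (Ne.symm hb), zero_pow two_ne_zero])
        (fun h => absurd (Finset.mem_univ i) h), if_pos rfl]
    simp_rw [hrow]
    rw [Finset.sum_const, Finset.card_univ, Fintype.card_fin, nsmul_eq_mul]
    field_simp
  -- cross terms vanish
  have Wcross : ∀ (i j : Fin d) (k l : Fin n), k ≠ l →
      (∫ ω, auxF i j (X k ω) * auxF i j (X l ω) ∂P) = 0 := by
    intro i j k l hkl
    have hind : IndepFun (auxF i j ∘ X k) (auxF i j ∘ X l) P :=
      (hindep.indepFun hkl).comp (auxF_meas i j) (auxF_meas i j)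
    have h := hind.integral_mul_eq_mul_integral (WInt i j k).aestronglyMeasurable (WInt i j l).aestronglyMeasurable
    have h2 : (∫ ω, auxF i j (X k ω) * auxF i j (X l ω) ∂P)
        = (∫ ω, auxF i j (X k ω) ∂P) * ∫ ω, auxF i j (X l ω) ∂P := h
    rw [h2, Wmean i j k, Wmean i j l, mul_zero]
  -- rewrite the integrand
  have key : ∀ ω, (∑ i, ∑ j,
        (((n : ℝ)⁻¹ * ∑ k, X k ω i * X k ω j) -
          (if i = j then (d : ℝ)⁻¹ else 0)) ^ 2)
      = (n : ℝ)⁻¹^2 * ∑ i, ∑ j, ∑ k, ∑ l, auxF i j (X k ω) * auxF i j (X l ω) := by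
    intro ω
    rw [Finset.mul_sum]
    refine Finset.sum_congr rfl fun i _ => ?_
    rw [Finset.mul_sum]
    refine Finset.sum_congr rfl fun j _ => ?_
    have h1 : ((n : ℝ)⁻¹ * ∑ k, X k ω i * X k ω j) -
        (if i = j then (d : ℝ)⁻¹ else 0) = (n : ℝ)⁻¹ * ∑ k, auxF i j (X k ω) := by
      simp only [auxF, Finset.sum_sub_distrib, Finset.sum_const, Finset.card_univ,
        Fintype.card_fin, nsmul_eq_mul, mul_sub]
      rw [← mul_assoc, inv_mul_cancel₀ hn0, one_mul]
    rw [h1, mul_pow, pow_two (∑ k, auxF i j (X k ω)), Fintype.sum_mul_sum]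
  rw [integral_congr_ae (Filter.Eventually.of_forall key), integral_const_mul]
  have hswap : (∫ ω, (∑ i, ∑ j, ∑ k, ∑ l, auxF i j (X k ω) * auxF i j (X l ω)) ∂P)
      = ∑ i, ∑ j, ∑ k, ∑ l, ∫ ω, auxF i j (X k ω) * auxF i j (X l ω) ∂P := by
    rw [integral_finset_sum _ (fun i _ => integrable_finset_sum _ fun j _ =>
      integrable_finset_sum _ fun k _ => integrable_finset_sum _ fun l _ => WWInt i j k l)]
    refine Finset.sum_congr rfl fun i _ => ?_
    rw [integral_finset_sum _ (fun j _ =>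
      integrable_finset_sum _ fun k _ => integrable_finset_sum _ fun l _ => WWInt i j k l)]
    refine Finset.sum_congr rfl fun j _ => ?_
    rw [integral_finset_sum _ (fun k _ => integrable_finset_sum _ fun l _ => WWInt i j k l)]
    refine Finset.sum_congr rfl fun k _ => ?_
    rw [integral_finset_sum _ (fun l _ => WWInt i j k l)]
  rw [hswap]
  have hdiag : (∑ i, ∑ j, ∑ k : Fin n, ∑ l : Fin n,
        ∫ ω, auxF i j (X k ω) * auxF i j (X l ω) ∂P)
      = ∑ i, ∑ j, ∑ k : Fin n, ∫ ω, (auxF i j (X k ω))^2 ∂P := by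
    refine Finset.sum_congr rfl fun i _ => Finset.sum_congr rfl fun j _ =>
      Finset.sum_congr rfl fun k _ => ?_
    rw [Finset.sum_eq_single k (fun l _ hlk => Wcross i j k l (Ne.symm hlk))
      (fun h => absurd (Finset.mem_univ k) h)]
    congr 1
    funext ω
    rw [pow_two]
  rw [hdiag]
  have hcomm : (∑ i, ∑ j, ∑ k : Fin n, ∫ ω, (auxF i j (X k ω))^2 ∂P)
      = ∑ k : Fin n, ∑ i, ∑ j, ∫ ω, (auxF i j (X k ω))^2 ∂P := by
    calc (∑ i, ∑ j, ∑ k : Fin n, ∫ ω, (auxF i j (X k ω))^2 ∂P)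
        = ∑ i, ∑ k : Fin n, ∑ j, ∫ ω, (auxF i j (X k ω))^2 ∂P :=
          Finset.sum_congr rfl fun i _ => Finset.sum_comm
      _ = ∑ k : Fin n, ∑ i, ∑ j, ∫ ω, (auxF i j (X k ω))^2 ∂P := Finset.sum_comm
  rw [hcomm]
  simp_rw [Wsq]
  rw [Finset.sum_const, Finset.card_univ, Fintype.card_fin, nsmul_eq_mul]
  field_simp
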